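/- Consider the dissenting-subjects matrix C(β₁,β₂). Any dominant left eigenvector γ of C(β₁,β₂) satisfies the identities: γ_i = c_{1,i}·γ_1 for every i ∈ {2,…,n−2}, γ_{n−1} = ((c_{1,n−1} + β₂·c_{1,n})/(1 − β₁β₂))·γ_1, and γ_n = ((c_{1,n} + β₁·c_{1,n−1})/(1 − β₁β₂))·γ_1. -/

import Mathlib

/-- The dissenting-subjects relative interaction matrix `C(β₁,β₂)` on nodes
`1,…,n`: row 1 has entries `c j` at columns `j = 2,…,n`; rows `i = 2,…,n-2`
have a `1` at column 1; row `n-1` has `1-β₁` at column 1 and `β₁` at column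
`n`; row `n` has `1-β₂` at column 1 and `β₂` at column `n-1`. -/
def dissentC (n : ℕ) (c : ℕ → ℝ) (β₁ β₂ : ℝ) : ℕ → ℕ → ℝ := fun i j =>
  if i = 1 then (if 2 ≤ j ∧ j ≤ n then c j else 0)
  else if 2 ≤ i ∧ i ≤ n - 2 then (if j = 1 then 1 else 0)
  else if i = n - 1 then (if j = 1 then 1 - β₁ else if j = n then β₁ else 0)
  else if i = n then (if j = 1 then 1 - β₂ else if j = n - 1 then β₂ else 0)
  else 0

theorem dissent_eigenvector_identities
    (n : ℕ) (hn : 4 ≤ n) (c : ℕ → ℝ) (β₁ β₂ : ℝ)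
    (hc : ∀ j ∈ Finset.Icc 2 n, 0 < c j)
    (hcsum : ∑ j ∈ Finset.Icc 2 n, c j = 1)
    (hβ₁ : β₁ ∈ Set.Ioo (0 : ℝ) 1) (hβ₂ : β₂ ∈ Set.Ioo (0 : ℝ) 1)
    (γ : ℕ → ℝ)
    (hγpos : ∀ i ∈ Finset.Icc 1 n, 0 < γ i)
    (hγsum : ∑ i ∈ Finset.Icc 1 n, γ i = 1)
    (heig : ∀ j ∈ Finset.Icc 1 n,
      ∑ i ∈ Finset.Icc 1 n, γ i * dissentC n c β₁ β₂ i j = γ j) :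
    (∀ i ∈ Finset.Icc 2 (n - 2), γ i = c i * γ 1) ∧
    γ (n - 1) = ((c (n - 1) + β₂ * c n) / (1 - β₁ * β₂)) * γ 1 ∧
    γ n = ((c n + β₁ * c (n - 1)) / (1 - β₁ * β₂)) * γ 1 := by
  obtain ⟨hb10, hb11⟩ := hβ₁
  obtain ⟨hb20, hb21⟩ := hβ₂
  have hne : (1 : ℝ) - β₁ * β₂ ≠ 0 := by nlinarith
  have h1mem : (1 : ℕ) ∈ Finset.Icc 1 n := by simp [Finset.mem_Icc]; omega
  have hnmem : n ∈ Finset.Icc 1 n := by simp [Finset.mem_Icc]; omega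
  -- middle columns
  have key1 : ∀ j ∈ Finset.Icc 2 (n - 2), γ j = c j * γ 1 := by
    intro j hj
    simp only [Finset.mem_Icc] at hj
    have hjm : j ∈ Finset.Icc 1 n := by simp [Finset.mem_Icc]; omega
    have h := heig j hjm
    have hs : ∑ i ∈ Finset.Icc 1 n, γ i * dissentC n c β₁ β₂ i j
        = ∑ i ∈ Finset.Icc 1 n, (if i = 1 then γ 1 * c j else 0) := by
      refine Finset.sum_congr rfl fun i hi => ?_
      simp only [Finset.mem_Icc] at hi
      unfold dissentC
      split_ifs <;> first | ring1 | (exfalso; omega) | (subst_vars; first | ring1 | (exfalso; omega))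
    rw [hs, Finset.sum_ite_eq' (Finset.Icc 1 n) 1 (fun _ => γ 1 * c j),
      if_pos h1mem] at h
    linarith [h]
  -- column n-1
  have eq1 : γ (n - 1) = c (n - 1) * γ 1 + β₂ * γ n := by
    have hjm : n - 1 ∈ Finset.Icc 1 n := by simp [Finset.mem_Icc]; omega
    have h := heig (n - 1) hjm
    have hs : ∑ i ∈ Finset.Icc 1 n, γ i * dissentC n c β₁ β₂ i (n - 1)
        = ∑ i ∈ Finset.Icc 1 n,
          ((if i = 1 then γ 1 * c (n - 1) else 0) + (if i = n then γ n * β₂ else 0)) := by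
      refine Finset.sum_congr rfl fun i hi => ?_
      simp only [Finset.mem_Icc] at hi
      unfold dissentC
      split_ifs <;> first | ring1 | (exfalso; omega) | (subst_vars; first | ring1 | (exfalso; omega))
    rw [hs, Finset.sum_add_distrib,
      Finset.sum_ite_eq' (Finset.Icc 1 n) 1 (fun _ => γ 1 * c (n - 1)),
      Finset.sum_ite_eq' (Finset.Icc 1 n) n (fun _ => γ n * β₂),
      if_pos h1mem, if_pos hnmem] at h
    linarith [h]
  -- column n
  have eq2 : γ n = c n * γ 1 + β₁ * γ (n - 1) := by
    have h := heig n hnmem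
    have hs : ∑ i ∈ Finset.Icc 1 n, γ i * dissentC n c β₁ β₂ i n
        = ∑ i ∈ Finset.Icc 1 n,
          ((if i = 1 then γ 1 * c n else 0) + (if i = n - 1 then γ (n - 1) * β₁ else 0)) := by
      refine Finset.sum_congr rfl fun i hi => ?_
      simp only [Finset.mem_Icc] at hi
      unfold dissentC
      split_ifs <;> first | ring1 | (exfalso; omega) | (subst_vars; first | ring1 | (exfalso; omega))
    have hn1mem : n - 1 ∈ Finset.Icc 1 n := by simp [Finset.mem_Icc]; omega
    rw [hs, Finset.sum_add_distrib,
      Finset.sum_ite_eq' (Finset.Icc 1 n) 1 (fun _ => γ 1 * c n),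
      Finset.sum_ite_eq' (Finset.Icc 1 n) (n - 1) (fun _ => γ (n - 1) * β₁),
      if_pos h1mem, if_pos hn1mem] at h
    linarith [h]
  refine ⟨key1, ?_, ?_⟩
  · rw [div_mul_eq_mul_div, eq_div_iff hne]
    linear_combination eq1 + β₂ * eq2
  · field_simp
    nlinarith [eq1, eq2]
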